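/- The simulation invariant is preserved: starting from a well-formed doubly-linked list state whose implementation configuration equals the TM configuration, after any number of simulation steps the state is still a well-formed doubly-linked list (pointers mutually inverse, acyclic, exactly one control), and its implementation configuration equals the TM configuration reached by the same number of TM transitions. -/

import Mathlib

inductive Dir | L | R

structure Cell (Γ L : Type*) where
  left : Option L
  right : Option L
  symbol : Γ

def followR {Γ L : Type*} (σ : L → Option (Cell Γ L)) : Option L → ℕ → Option L
  | ol, 0 => ol
  | ol, k + 1 => followR σ (ol.bind fun ℓ => (σ ℓ).bind Cell.right) k

def followL {Γ L : Type*} (σ : L → Option (Cell Γ L)) : Option L → ℕ → Option L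
  | ol, 0 => ol
  | ol, k + 1 => followL σ (ol.bind fun ℓ => (σ ℓ).bind Cell.left) k

def symAt {Γ L : Type*} (σ : L → Option (Cell Γ L)) (B : Γ) (ol : Option L) : Γ :=
  match ol.bind σ with
  | some c => c.symbol
  | none => B

def tapeOf {Γ L : Type*} (σ : L → Option (Cell Γ L)) (B : Γ) (h : L) : ℤ → Γ :=
  fun i =>
    if 0 ≤ i then symAt σ B (followR σ (some h) i.toNat)
    else symAt σ B (followL σ (some h) (-i).toNat)

def stepR {Γ L : Type*} [DecidableEq L] (σ : L → Option (Cell Γ L)) (B : Γ)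
    (h : L) (s' : Γ) (fresh : L) : (L → Option (Cell Γ L)) × L :=
  match σ h with
  | none => (σ, h)
  | some cl =>
    match cl.right with
    | some r => (Function.update σ h (some ⟨cl.left, cl.right, s'⟩), r)
    | none =>
      (Function.update (Function.update σ h (some ⟨cl.left, some fresh, s'⟩))
        fresh (some ⟨some h, none, B⟩), fresh)

def stepL {Γ L : Type*} [DecidableEq L] (σ : L → Option (Cell Γ L)) (B : Γ)
    (h : L) (s' : Γ) (fresh : L) : (L → Option (Cell Γ L)) × L :=
  match σ h with
  | none => (σ, h)
  | some cl =>
    match cl.left with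
    | some l => (Function.update σ h (some ⟨cl.left, cl.right, s'⟩), l)
    | none =>
      (Function.update (Function.update σ h (some ⟨some fresh, cl.right, s'⟩))
        fresh (some ⟨none, some h, B⟩), fresh)

/-- A simulation state: the cell map, the head label and the (unique) control state. -/
structure SimState (Q Γ L : Type*) where
  cells : L → Option (Cell Γ L)
  head : L
  st : Q

/-- Well-formedness: the cells form a finite acyclic doubly-linked chain (left/right
pointers mutually inverse), no other cells exist, and the head lies on the chain. -/
def WF {Q Γ L : Type*} (s : SimState Q Γ L) : Prop :=
  ∃ (n : ℕ) (c : Fin (n + 1) → L), Function.Injective c ∧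
    (∀ i : Fin (n + 1), ∃ sym : Γ, s.cells (c i) = some
      { left := if _ : i.val = 0 then none
                else some (c ⟨i.val - 1, by have := i.isLt; omega⟩),
        right := if _ : i.val = n then none
                 else some (c ⟨i.val + 1, by have := i.isLt; omega⟩),
        symbol := sym }) ∧
    (∀ ℓ : L, ℓ ∉ Set.range c → s.cells ℓ = none) ∧
    (∃ k : Fin (n + 1), s.head = c k)

/-- The implementation configuration read off a simulation state. -/
def implConfig {Q Γ L : Type*} (B : Γ) (s : SimState Q Γ L) : Q × (ℤ → Γ) :=
  (s.st, tapeOf s.cells B s.head)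

/-- One simulation step: perform the `δ`-directed update, choosing some fresh label. -/
def SimStep {Q Γ L : Type*} [DecidableEq L] (δ : Q × Γ → Option (Q × Γ × Dir)) (B : Γ)
    (s s' : SimState Q Γ L) : Prop :=
  ∃ q' sym D, δ (s.st, tapeOf s.cells B s.head 0) = some (q', sym, D) ∧
    ∃ fresh, s.cells fresh = none ∧
      s' = match D with
        | Dir.R => ⟨(stepR s.cells B s.head sym fresh).1,
                    (stepR s.cells B s.head sym fresh).2, q'⟩
        | Dir.L => ⟨(stepL s.cells B s.head sym fresh).1,
                    (stepL s.cells B s.head sym fresh).2, q'⟩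

def shiftTape {Γ : Type*} (D : Dir) (s' : Γ) (t : ℤ → Γ) : ℤ → Γ := fun i =>
  match D with
  | Dir.L => if i = 1 then s' else t (i - 1)
  | Dir.R => if i = -1 then s' else t (i + 1)

def TMStep {Q Γ : Type*} (δ : Q × Γ → Option (Q × Γ × Dir)) :
    Q × (ℤ → Γ) → Q × (ℤ → Γ) → Prop := fun c c' =>
  ∃ q' s' D, δ (c.1, c.2 0) = some (q', s', D) ∧ c' = (q', shiftTape D s' c.2)

section Aux
variable {Q Γ L : Type*}

def ccell (n : ℕ) (c : Fin (n + 1) → L) (f : Fin (n + 1) → Γ) (i : Fin (n + 1)) : Cell Γ L where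
  left := if _ : i.val = 0 then none else some (c ⟨i.val - 1, by have := i.isLt; omega⟩)
  right := if _ : i.val = n then none else some (c ⟨i.val + 1, by have := i.isLt; omega⟩)
  symbol := f i

def DLChain (σ : L → Option (Cell Γ L)) (n : ℕ) (c : Fin (n + 1) → L)
    (f : Fin (n + 1) → Γ) : Prop :=
  Function.Injective c ∧ (∀ i, σ (c i) = some (ccell n c f i)) ∧
    (∀ ℓ : L, ℓ ∉ Set.range c → σ ℓ = none)

lemma WF_iff (s : SimState Q Γ L) :
    WF s ↔ ∃ (n : ℕ) (c : Fin (n + 1) → L) (f : Fin (n + 1) → Γ) (k : Fin (n + 1)),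
      DLChain s.cells n c f ∧ s.head = c k := by
  constructor
  · rintro ⟨n, c, hinj, hcell, hnone, k, hk⟩
    choose f hf using hcell
    exact ⟨n, c, f, k, ⟨hinj, fun i => hf i, hnone⟩, hk⟩
  · rintro ⟨n, c, f, k, ⟨hinj, hcell, hnone⟩, hk⟩
    exact ⟨n, c, hinj, fun i => ⟨f i, hcell i⟩, hnone, k, hk⟩

lemma followR_none (σ : L → Option (Cell Γ L)) : ∀ m, followR σ none m = none
  | 0 => rfl
  | m + 1 => by
      show followR σ (Option.bind none _) m = none
      exact followR_none σ m

lemma followL_none (σ : L → Option (Cell Γ L)) : ∀ m, followL σ none m = none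
  | 0 => rfl
  | m + 1 => by
      show followL σ (Option.bind none _) m = none
      exact followL_none σ m

lemma followR_chain {σ : L → Option (Cell Γ L)} {n c f} (h : DLChain σ n c f) :
    ∀ (m : ℕ) (j : Fin (n + 1)), followR σ (some (c j)) m =
      if hm : j.val + m ≤ n then some (c ⟨j.val + m, by omega⟩) else none
  | 0, j => by
      rw [dif_pos (by omega)]
      exact congrArg (some ∘ c) (by ext; simp)
  | m + 1, j => by
      show followR σ (Option.bind (some (c j)) _) m = _
      rw [Option.bind_some, h.2.1 j]
      show followR σ (ccell n c f j).right m = _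
      by_cases hj : j.val = n
      · rw [show (ccell n c f j).right = none from dif_pos hj, followR_none,
          dif_neg (by omega)]
      · rw [show (ccell n c f j).right = some (c ⟨j.val + 1, by have := j.isLt; omega⟩)
          from dif_neg hj, followR_chain h m ⟨j.val + 1, by have := j.isLt; omega⟩]
        by_cases hm : j.val + (m + 1) ≤ n
        · rw [dif_pos (by simp only [Fin.val_mk]; omega), dif_pos hm]
          exact congrArg (some ∘ c) (by ext; simp; omega)
        · rw [dif_neg (by simp only [Fin.val_mk]; omega), dif_neg hm]

lemma followL_chain {σ : L → Option (Cell Γ L)} {n c f} (h : DLChain σ n c f) :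
    ∀ (m : ℕ) (j : Fin (n + 1)), followL σ (some (c j)) m =
      if hm : m ≤ j.val then some (c ⟨j.val - m, by have := j.isLt; omega⟩) else none
  | 0, j => by
      rw [dif_pos (by omega)]
      exact congrArg (some ∘ c) (by ext; simp)
  | m + 1, j => by
      show followL σ (Option.bind (some (c j)) _) m = _
      rw [Option.bind_some, h.2.1 j]
      show followL σ (ccell n c f j).left m = _
      by_cases hj : j.val = 0
      · rw [show (ccell n c f j).left = none from dif_pos hj, followL_none,
          dif_neg (by omega)]
      · rw [show (ccell n c f j).left = some (c ⟨j.val - 1, by have := j.isLt; omega⟩)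
          from dif_neg hj, followL_chain h m ⟨j.val - 1, by have := j.isLt; omega⟩]
        by_cases hm : m + 1 ≤ j.val
        · rw [dif_pos (by simp only [Fin.val_mk]; omega), dif_pos hm]
          exact congrArg (some ∘ c) (by ext; simp; omega)
        · rw [dif_neg (by simp only [Fin.val_mk]; omega), dif_neg hm]

end Aux
section Aux2
variable {Q Γ L : Type*}

def tf (n : ℕ) (f : Fin (n + 1) → Γ) (B : Γ) (j : ℤ) : Γ :=
  if h : 0 ≤ j ∧ j ≤ (n : ℤ) then f ⟨j.toNat, by omega⟩ else B

lemma symAt_some {σ : L → Option (Cell Γ L)} {n c f} (h : DLChain σ n c f) (B : Γ)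
    (j : Fin (n + 1)) : symAt σ B (some (c j)) = f j := by
  rw [symAt, Option.bind_some, h.2.1 j]; rfl

lemma tapeOf_chain {σ : L → Option (Cell Γ L)} {n c f} (h : DLChain σ n c f) (B : Γ)
    (j : Fin (n + 1)) (i : ℤ) : tapeOf σ B (c j) i = tf n f B ((j : ℤ) + i) := by
  rw [tapeOf]
  by_cases hi : 0 ≤ i
  · rw [if_pos hi, followR_chain h i.toNat j]
    by_cases hm : j.val + i.toNat ≤ n
    · rw [dif_pos hm, symAt_some h, tf, dif_pos (by omega)]
      congr 1
      ext
      simp only [Fin.val_mk]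
      omega
    · rw [dif_neg hm, tf, dif_neg (by omega)]
      rfl
  · rw [if_neg hi, followL_chain h (-i).toNat j]
    by_cases hm : (-i).toNat ≤ j.val
    · rw [dif_pos hm, symAt_some h, tf, dif_pos (by omega)]
      congr 1
      ext
      simp only [Fin.val_mk]
      omega
    · rw [dif_neg hm, tf, dif_neg (by omega)]
      rfl

end Aux2
section Aux3
variable {Q Γ L : Type*} [DecidableEq L]

omit [DecidableEq L] in
lemma fresh_not_range {σ : L → Option (Cell Γ L)} {n c f} (h : DLChain σ n c f) {fresh : L}
    (hf : σ fresh = none) : fresh ∉ Set.range c := by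
  rintro ⟨i, rfl⟩
  rw [h.2.1 i] at hf
  exact Option.some_ne_none _ hf

omit [DecidableEq L] in
lemma cellExt {a b : Cell Γ L} (h1 : a.left = b.left) (h2 : a.right = b.right)
    (h3 : a.symbol = b.symbol) : a = b := by
  cases a; cases b; cases h1; cases h2; cases h3; rfl

lemma stepR_mid {σ : L → Option (Cell Γ L)} {h : L} {cl r} (hσ : σ h = some cl)
    (hr : cl.right = some r) (B s' : Γ) (fresh : L) :
    stepR σ B h s' fresh = (Function.update σ h (some ⟨cl.left, cl.right, s'⟩), r) := by
  simp only [stepR, hσ, hr]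

lemma stepR_end {σ : L → Option (Cell Γ L)} {h : L} {cl} (hσ : σ h = some cl)
    (hr : cl.right = none) (B s' : Γ) (fresh : L) :
    stepR σ B h s' fresh = (Function.update (Function.update σ h
      (some ⟨cl.left, some fresh, s'⟩)) fresh (some ⟨some h, none, B⟩), fresh) := by
  simp only [stepR, hσ, hr]

lemma stepL_mid {σ : L → Option (Cell Γ L)} {h : L} {cl l} (hσ : σ h = some cl)
    (hl : cl.left = some l) (B s' : Γ) (fresh : L) :
    stepL σ B h s' fresh = (Function.update σ h (some ⟨cl.left, cl.right, s'⟩), l) := by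
  simp only [stepL, hσ, hl]

lemma stepL_end {σ : L → Option (Cell Γ L)} {h : L} {cl} (hσ : σ h = some cl)
    (hl : cl.left = none) (B s' : Γ) (fresh : L) :
    stepL σ B h s' fresh = (Function.update (Function.update σ h
      (some ⟨some fresh, cl.right, s'⟩)) fresh (some ⟨none, some h, B⟩), fresh) := by
  simp only [stepL, hσ, hl]

variable {α : Type*}

/-- extend a `Fin (n+1)`-indexed family on the right -/
def extR (n : ℕ) (c : Fin (n + 1) → α) (x : α) (i : Fin (n + 1 + 1)) : α :=
  if _ : i.val ≤ n then c ⟨i.val, by omega⟩ else x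

lemma extR_le {n : ℕ} (c : Fin (n + 1) → α) (x : α) {i : Fin (n + 1 + 1)}
    (h : i.val ≤ n) : extR n c x i = c ⟨i.val, by omega⟩ := dif_pos h

lemma extR_gt {n : ℕ} (c : Fin (n + 1) → α) (x : α) {i : Fin (n + 1 + 1)}
    (h : ¬ i.val ≤ n) : extR n c x i = x := dif_neg h

omit [DecidableEq L] in
lemma fval {n : ℕ} (f : Fin (n + 1) → Γ) {a b : ℕ} (ha : a < n + 1) (hb : b < n + 1)
    (hab : a = b) : f ⟨a, ha⟩ = f ⟨b, hb⟩ := by subst hab; rfl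

lemma step_R {σ : L → Option (Cell Γ L)} {n c f} (h : DLChain σ n c f)
    (k : Fin (n + 1)) (fresh : L) (hf : σ fresh = none) (sym B : Γ) :
    ∃ (n' : ℕ) (c' : Fin (n' + 1) → L) (f' : Fin (n' + 1) → Γ) (k' : Fin (n' + 1)),
      DLChain (stepR σ B (c k) sym fresh).1 n' c' f' ∧
      (stepR σ B (c k) sym fresh).2 = c' k' ∧
      ∀ i : ℤ, tf n' f' B ((k' : ℤ) + i) =
        shiftTape Dir.R sym (fun i => tf n f B ((k : ℤ) + i)) i := by
  have hinj := h.1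
  have hcell := h.2.1
  have hnr := fresh_not_range h hf
  by_cases hk : k.val = n
  · -- extend to the right
    have hr : (ccell n c f k).right = none := dif_pos hk
    rw [stepR_end (hcell k) hr]
    dsimp only
    refine ⟨n + 1, extR n c fresh, extR n (Function.update f k sym) B,
      ⟨n + 1, by omega⟩, ⟨?_, ?_, ?_⟩, ?_, ?_⟩
    · -- injective
      intro a b hab
      by_cases ha : a.val ≤ n <;> by_cases hb : b.val ≤ n
      · rw [extR_le _ _ ha, extR_le _ _ hb] at hab
        have := hinj hab
        ext; simpa [Fin.ext_iff] using this
      · rw [extR_le _ _ ha, extR_gt _ _ hb] at hab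
        exact absurd ⟨_, hab⟩ hnr
      · rw [extR_gt _ _ ha, extR_le _ _ hb] at hab
        exact absurd ⟨_, hab.symm⟩ hnr
      · ext
        have := a.isLt; have := b.isLt
        omega
    · -- cells
      intro i
      by_cases hi1 : i.val ≤ n
      · rw [extR_le _ _ hi1]
        have hne : c ⟨i.val, by omega⟩ ≠ fresh := fun hh => hnr ⟨_, hh⟩
        rw [Function.update_of_ne hne]
        by_cases hi2 : i.val = n
        · have hik : (⟨i.val, by omega⟩ : Fin (n + 1)) = k := by
            ext; simp [hi2, hk]
          rw [hik, Function.update_self]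
          refine congrArg some (cellExt ?_ ?_ ?_)
          · show (ccell n c f k).left = (ccell (n+1) _ _ i).left
            simp only [ccell]
            by_cases h0 : i.val = 0
            · rw [dif_pos h0, dif_pos (show k.val = 0 by omega)]
            · rw [dif_neg h0, dif_neg (show ¬ k.val = 0 by omega),
                extR_le _ _ (show (⟨i.val - 1, by omega⟩ : Fin (n+2)).val ≤ n by simp; omega)]
              exact congrArg (some ∘ c) (by ext; simp; omega)
          · show some fresh = (ccell (n+1) _ _ i).right
            simp only [ccell]
            rw [dif_neg (show ¬ i.val = n + 1 by omega),
              extR_gt _ _ (show ¬ (⟨i.val + 1, by omega⟩ : Fin (n+2)).val ≤ n by simp; omega)]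
          · show sym = (ccell (n+1) _ _ i).symbol
            simp only [ccell]
            rw [extR_le _ _ hi1, Function.update_apply, if_pos (by ext; simp; omega)]
        · have hik : c ⟨i.val, by omega⟩ ≠ c k := fun hh => by
            have := hinj hh
            simp [Fin.ext_iff, hk] at this
            omega
          rw [Function.update_of_ne hik, hcell ⟨i.val, by omega⟩]
          refine congrArg some (cellExt ?_ ?_ ?_)
          · show (ccell n c f _).left = (ccell (n+1) _ _ i).left
            simp only [ccell, Fin.val_mk]
            by_cases h0 : i.val = 0
            · rw [dif_pos h0, dif_pos h0]
            · rw [dif_neg h0, dif_neg h0,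
                extR_le _ _ (show (⟨i.val - 1, by omega⟩ : Fin (n+2)).val ≤ n by simp; omega)]
          · show (ccell n c f _).right = (ccell (n+1) _ _ i).right
            simp only [ccell, Fin.val_mk]
            rw [dif_neg hi2, dif_neg (show ¬ i.val = n + 1 by omega),
              extR_le _ _ (show (⟨i.val + 1, by omega⟩ : Fin (n+2)).val ≤ n by simp; omega)]
          · show f _ = (ccell (n+1) _ _ i).symbol
            simp only [ccell]
            rw [extR_le _ _ hi1, Function.update_apply,
              if_neg (by simp only [Fin.ext_iff, Fin.val_mk]; omega)]
      · rw [extR_gt _ _ hi1, Function.update_self]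
        have hi2 : i.val = n + 1 := by have := i.isLt; omega
        refine congrArg some (cellExt ?_ ?_ ?_)
        · show some (c k) = (ccell (n+1) _ _ i).left
          simp only [ccell]
          rw [dif_neg (show ¬ i.val = 0 by omega),
            extR_le _ _ (show (⟨i.val - 1, by omega⟩ : Fin (n+2)).val ≤ n by simp; omega)]
          exact congrArg (some ∘ c) (by ext; simp; omega)
        · show none = (ccell (n+1) _ _ i).right
          simp only [ccell]
          rw [dif_pos hi2]
        · show B = (ccell (n+1) _ _ i).symbol
          simp only [ccell]
          rw [extR_gt _ _ hi1]
    · -- off-range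
      intro ℓ hℓ
      have h1 : ℓ ≠ fresh := by
        intro hh
        exact hℓ ⟨⟨n + 1, by omega⟩, by rw [extR_gt _ _ (by simp)]; exact hh.symm⟩
      have h2 : ℓ ∉ Set.range c := by
        rintro ⟨i, rfl⟩
        refine hℓ ⟨⟨i.val, by have := i.isLt; omega⟩, ?_⟩
        rw [extR_le _ _ (show (⟨i.val, by have := i.isLt; omega⟩ : Fin (n+2)).val ≤ n by
          simp only [Fin.val_mk]; have := i.isLt; omega)]
      have h3 : ℓ ≠ c k := fun hh => h2 ⟨k, hh.symm⟩
      rw [Function.update_of_ne h1, Function.update_of_ne h3]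
      exact h.2.2 ℓ h2
    · -- head
      rw [extR_gt _ _ (by simp)]
    · -- tape
      intro i
      simp only [shiftTape]
      by_cases hi : i = -1
      · rw [if_pos hi, hi, tf, dif_pos (by simp)]
        rw [extR_le _ _ (by simp only [Fin.val_mk]; omega)]
        rw [Function.update_apply, if_pos (by ext; simp only [Fin.val_mk]; omega)]
      · rw [if_neg hi, tf, tf]
        by_cases hb : 0 ≤ ((⟨n + 1, by omega⟩ : Fin (n + 2)) : ℤ) + i ∧
            ((⟨n + 1, by omega⟩ : Fin (n + 2)) : ℤ) + i ≤ ((n + 1 : ℕ) : ℤ)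
        · rw [dif_pos hb]
          by_cases hi0 : i = 0
          · rw [extR_gt _ _ (by simp at hb ⊢; omega)]
            rw [dif_neg (by push_cast; omega)]
          · rw [extR_le _ _ (by simp at hb ⊢; omega)]
            rw [dif_pos (by simp at hb ⊢; push_cast; omega)]
            rw [Function.update_apply, if_neg (by
              simp only [Fin.ext_iff, Fin.val_mk]
              simp at hb
              omega)]
            exact fval f _ _ (by simp at hb ⊢; omega)
        · rw [dif_neg hb, dif_neg (by simp at hb ⊢; push_cast at hb ⊢; omega)]
  · -- move right within the chain
    have hr : (ccell n c f k).right = some (c ⟨k.val + 1, by have := k.isLt; omega⟩) :=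
      dif_neg hk
    rw [stepR_mid (hcell k) hr]
    dsimp only
    refine ⟨n, c, Function.update f k sym, ⟨k.val + 1, by have := k.isLt; omega⟩,
      ⟨hinj, ?_, ?_⟩, rfl, ?_⟩
    · intro i
      by_cases hik : i = k
      · subst hik
        rw [Function.update_self]
        refine congrArg some (cellExt rfl rfl ?_)
        show sym = Function.update f i sym i
        rw [Function.update_self]
      · rw [Function.update_of_ne (fun hh => hik (hinj hh)), hcell i]
        refine congrArg some (cellExt rfl rfl ?_)
        show f i = Function.update f k sym i
        rw [Function.update_of_ne hik]
    · intro ℓ hℓ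
      rw [Function.update_of_ne (fun hh => hℓ ⟨k, hh.symm⟩)]
      exact h.2.2 ℓ hℓ
    · intro i
      simp only [shiftTape]
      by_cases hi : i = -1
      · rw [if_pos hi, hi, tf, dif_pos (by simp; omega)]
        rw [Function.update_apply, if_pos (by ext; simp only [Fin.val_mk]; omega)]
      · rw [if_neg hi, tf, tf]
        have harith : ((⟨k.val + 1, by have := k.isLt; omega⟩ : Fin (n + 1)) : ℤ) + i =
            (k : ℤ) + (i + 1) := by simp; ring
        rw [harith]
        by_cases hb : 0 ≤ (k : ℤ) + (i + 1) ∧ (k : ℤ) + (i + 1) ≤ (n : ℤ)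
        · rw [dif_pos hb, dif_pos hb]
          rw [Function.update_apply, if_neg (by
            simp only [Fin.ext_iff, Fin.val_mk]
            omega)]
        · rw [dif_neg hb, dif_neg hb]

end Aux3
section Aux4
variable {Q Γ L : Type*} [DecidableEq L]

/-- extend a `Fin (n+1)`-indexed family on the left -/
def extL {α : Type*} (n : ℕ) (c : Fin (n + 1) → α) (x : α) (i : Fin (n + 1 + 1)) : α :=
  if _ : i.val = 0 then x else c ⟨i.val - 1, by have := i.isLt; omega⟩

lemma extL_pos {α : Type*} {n : ℕ} (c : Fin (n + 1) → α) (x : α) {i : Fin (n + 1 + 1)}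
    (h : ¬ i.val = 0) : extL n c x i = c ⟨i.val - 1, by have := i.isLt; omega⟩ := dif_neg h

lemma extL_zero {α : Type*} {n : ℕ} (c : Fin (n + 1) → α) (x : α) {i : Fin (n + 1 + 1)}
    (h : i.val = 0) : extL n c x i = x := dif_pos h

lemma step_L {σ : L → Option (Cell Γ L)} {n c f} (h : DLChain σ n c f)
    (k : Fin (n + 1)) (fresh : L) (hf : σ fresh = none) (sym B : Γ) :
    ∃ (n' : ℕ) (c' : Fin (n' + 1) → L) (f' : Fin (n' + 1) → Γ) (k' : Fin (n' + 1)),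
      DLChain (stepL σ B (c k) sym fresh).1 n' c' f' ∧
      (stepL σ B (c k) sym fresh).2 = c' k' ∧
      ∀ i : ℤ, tf n' f' B ((k' : ℤ) + i) =
        shiftTape Dir.L sym (fun i => tf n f B ((k : ℤ) + i)) i := by
  have hinj := h.1
  have hcell := h.2.1
  have hnr := fresh_not_range h hf
  by_cases hk : k.val = 0
  · -- extend to the left
    have hl : (ccell n c f k).left = none := dif_pos hk
    rw [stepL_end (hcell k) hl]
    dsimp only
    refine ⟨n + 1, extL n c fresh, extL n (Function.update f k sym) B,
      ⟨0, by omega⟩, ⟨?_, ?_, ?_⟩, ?_, ?_⟩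
    · -- injective
      intro a b hab
      by_cases ha : a.val = 0 <;> by_cases hb : b.val = 0
      · ext; omega
      · rw [extL_zero _ _ ha, extL_pos _ _ hb] at hab
        exact absurd ⟨_, hab.symm⟩ hnr
      · rw [extL_pos _ _ ha, extL_zero _ _ hb] at hab
        exact absurd ⟨_, hab⟩ hnr
      · rw [extL_pos _ _ ha, extL_pos _ _ hb] at hab
        have := hinj hab
        simp only [Fin.mk.injEq] at this
        ext
        omega
    · -- cells
      intro i
      by_cases hi1 : i.val = 0
      · rw [extL_zero _ _ hi1, Function.update_self]
        refine congrArg some (cellExt ?_ ?_ ?_)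
        · show none = (ccell (n+1) _ _ i).left
          simp only [ccell]
          rw [dif_pos hi1]
        · show some (c k) = (ccell (n+1) _ _ i).right
          simp only [ccell]
          rw [dif_neg (show ¬ i.val = n + 1 by omega),
            extL_pos _ _ (show ¬ (⟨i.val + 1, by omega⟩ : Fin (n+2)).val = 0 by simp)]
          exact congrArg (some ∘ c) (by ext; simp only [Fin.val_mk]; omega)
        · show B = (ccell (n+1) _ _ i).symbol
          simp only [ccell]
          rw [extL_zero _ _ hi1]
      · rw [extL_pos _ _ hi1]
        have hne : c ⟨i.val - 1, by have := i.isLt; omega⟩ ≠ fresh := fun hh => hnr ⟨_, hh⟩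
        rw [Function.update_of_ne hne]
        by_cases hi2 : i.val = 1
        · have hik : (⟨i.val - 1, by have := i.isLt; omega⟩ : Fin (n + 1)) = k := by
            ext; simp only [Fin.val_mk]; omega
          rw [hik, Function.update_self]
          refine congrArg some (cellExt ?_ ?_ ?_)
          · show some fresh = (ccell (n+1) _ _ i).left
            simp only [ccell]
            rw [dif_neg hi1, extL_zero _ _ (show (⟨i.val - 1, by have := i.isLt; omega⟩ :
              Fin (n+2)).val = 0 by simp only [Fin.val_mk]; omega)]
          · show (ccell n c f k).right = (ccell (n+1) _ _ i).right
            simp only [ccell]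
            by_cases hn : k.val = n
            · rw [dif_pos hn, dif_pos (show i.val = n + 1 by omega)]
            · rw [dif_neg hn, dif_neg (show ¬ i.val = n + 1 by omega),
                extL_pos _ _ (show ¬ (⟨i.val + 1, by omega⟩ : Fin (n+2)).val = 0 by simp)]
              exact congrArg (some ∘ c) (by ext; simp only [Fin.val_mk]; omega)
          · show sym = (ccell (n+1) _ _ i).symbol
            simp only [ccell]
            rw [extL_pos _ _ hi1, Function.update_apply,
              if_pos (by ext; simp only [Fin.val_mk]; omega)]
        · have hik : c ⟨i.val - 1, by have := i.isLt; omega⟩ ≠ c k := fun hh => by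
            have := hinj hh
            simp [Fin.ext_iff, hk] at this
            omega
          rw [Function.update_of_ne hik, hcell ⟨i.val - 1, by have := i.isLt; omega⟩]
          refine congrArg some (cellExt ?_ ?_ ?_)
          · show (ccell n c f _).left = (ccell (n+1) _ _ i).left
            simp only [ccell, Fin.val_mk]
            rw [dif_neg (show ¬ i.val - 1 = 0 by omega), dif_neg hi1,
              extL_pos _ _ (show ¬ (⟨i.val - 1, by have := i.isLt; omega⟩ :
                Fin (n+2)).val = 0 by simp only [Fin.val_mk]; omega)]
          · show (ccell n c f _).right = (ccell (n+1) _ _ i).right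
            simp only [ccell, Fin.val_mk]
            by_cases hn : i.val - 1 = n
            · rw [dif_pos hn, dif_pos (show i.val = n + 1 by omega)]
            · rw [dif_neg hn, dif_neg (show ¬ i.val = n + 1 by have := i.isLt; omega),
                extL_pos _ _ (show ¬ (⟨i.val + 1, by omega⟩ : Fin (n+2)).val = 0 by simp)]
              exact congrArg (some ∘ c) (by ext; simp only [Fin.val_mk]; omega)
          · show f _ = (ccell (n+1) _ _ i).symbol
            simp only [ccell]
            rw [extL_pos _ _ hi1, Function.update_apply,
              if_neg (by simp only [Fin.ext_iff, Fin.val_mk]; omega)]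
    · -- off-range
      intro ℓ hℓ
      have h1 : ℓ ≠ fresh := by
        intro hh
        exact hℓ ⟨⟨0, by omega⟩, by rw [extL_zero _ _ (by simp)]; exact hh.symm⟩
      have h2 : ℓ ∉ Set.range c := by
        rintro ⟨i, rfl⟩
        refine hℓ ⟨⟨i.val + 1, by have := i.isLt; omega⟩, ?_⟩
        rw [extL_pos _ _ (show ¬ (⟨i.val + 1, by have := i.isLt; omega⟩ :
          Fin (n+2)).val = 0 by simp)]
        exact congrArg c (by ext; simp only [Fin.val_mk]; omega)
      have h3 : ℓ ≠ c k := fun hh => h2 ⟨k, hh.symm⟩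
      rw [Function.update_of_ne h1, Function.update_of_ne h3]
      exact h.2.2 ℓ h2
    · -- head
      rw [extL_zero _ _ (by simp)]
    · -- tape
      intro i
      simp only [shiftTape]
      by_cases hi : i = 1
      · rw [if_pos hi, hi, tf, dif_pos (by simp)]
        rw [extL_pos _ _ (by simp only [Fin.val_mk]; omega)]
        rw [Function.update_apply, if_pos (by ext; simp only [Fin.val_mk]; omega)]
      · rw [if_neg hi, tf, tf]
        by_cases hb : 0 ≤ ((⟨0, by omega⟩ : Fin (n + 2)) : ℤ) + i ∧
            ((⟨0, by omega⟩ : Fin (n + 2)) : ℤ) + i ≤ ((n + 1 : ℕ) : ℤ)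
        · rw [dif_pos hb]
          by_cases hi0 : i = 0
          · rw [extL_zero _ _ (by simp at hb ⊢; omega)]
            rw [dif_neg (by simp only [Fin.val_mk] at hb ⊢; omega)]
          · rw [extL_pos _ _ (by simp at hb ⊢; omega)]
            rw [dif_pos (by simp only [Fin.val_mk] at hb ⊢; omega)]
            rw [Function.update_apply, if_neg (by
              simp only [Fin.ext_iff, Fin.val_mk]
              simp at hb
              omega)]
            exact fval f _ _ (by simp at hb ⊢; omega)
        · rw [dif_neg hb, dif_neg (by simp only [Fin.val_mk] at hb ⊢; omega)]
  · -- move left within the chain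
    have hl : (ccell n c f k).left = some (c ⟨k.val - 1, by have := k.isLt; omega⟩) :=
      dif_neg hk
    rw [stepL_mid (hcell k) hl]
    dsimp only
    refine ⟨n, c, Function.update f k sym, ⟨k.val - 1, by have := k.isLt; omega⟩,
      ⟨hinj, ?_, ?_⟩, rfl, ?_⟩
    · intro i
      by_cases hik : i = k
      · subst hik
        rw [Function.update_self]
        refine congrArg some (cellExt rfl rfl ?_)
        show sym = Function.update f i sym i
        rw [Function.update_self]
      · rw [Function.update_of_ne (fun hh => hik (hinj hh)), hcell i]
        refine congrArg some (cellExt rfl rfl ?_)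
        show f i = Function.update f k sym i
        rw [Function.update_of_ne hik]
    · intro ℓ hℓ
      rw [Function.update_of_ne (fun hh => hℓ ⟨k, hh.symm⟩)]
      exact h.2.2 ℓ hℓ
    · intro i
      simp only [shiftTape]
      by_cases hi : i = 1
      · rw [if_pos hi, hi, tf, dif_pos (by omega)]
        rw [Function.update_apply, if_pos (by ext; simp only [Fin.val_mk]; omega)]
      · rw [if_neg hi, tf, tf]
        have harith : ((⟨k.val - 1, by have := k.isLt; omega⟩ : Fin (n + 1)) : ℤ) + i =
            (k : ℤ) + (i - 1) := by simp only [Fin.val_mk]; push_cast; omega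
        rw [harith]
        by_cases hb : 0 ≤ (k : ℤ) + (i - 1) ∧ (k : ℤ) + (i - 1) ≤ (n : ℤ)
        · rw [dif_pos hb, dif_pos hb]
          rw [Function.update_apply, if_neg (by
            simp only [Fin.ext_iff, Fin.val_mk]
            omega)]
        · rw [dif_neg hb, dif_neg hb]

end Aux4
section Aux5
variable {Q Γ L : Type*} [DecidableEq L]

lemma one_step {δ : Q × Γ → Option (Q × Γ × Dir)} {B : Γ} {s s' : SimState Q Γ L}
    {tc tc' : Q × (ℤ → Γ)} (hWF : WF s) (hc : implConfig B s = tc)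
    (hs : SimStep δ B s s') (ht : TMStep δ tc tc') :
    WF s' ∧ implConfig B s' = tc' := by
  obtain ⟨n, c, f, k, hch, hk⟩ := (WF_iff s).1 hWF
  obtain ⟨q', sym, D, hδ, fresh, hfresh, hs'⟩ := hs
  obtain ⟨q2, s2, D2, hδ2, htc'⟩ := ht
  rw [← hc] at hδ2 htc'
  simp only [implConfig] at hδ2 htc'
  rw [hδ] at hδ2
  obtain ⟨rfl, rfl, rfl⟩ : q' = q2 ∧ sym = s2 ∧ D = D2 := by
    have := Option.some.inj hδ2
    simp only [Prod.mk.injEq] at this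
    exact ⟨this.1, this.2.1, this.2.2⟩
  subst htc'
  cases D
  · -- Dir.L
    have hs'' : s' = ⟨(stepL s.cells B s.head sym fresh).1,
        (stepL s.cells B s.head sym fresh).2, q'⟩ := hs'
    subst hs''
    rw [hk]
    obtain ⟨n', c', f', k', hch', hhd, htape⟩ := step_L hch k fresh hfresh sym B
    constructor
    · exact (WF_iff _).2 ⟨n', c', f', k', hch', hhd⟩
    · show (q', tapeOf (stepL s.cells B (c k) sym fresh).1 B
        (stepL s.cells B (c k) sym fresh).2) = _
      refine congrArg (Prod.mk q') (funext fun i => ?_)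
      calc tapeOf (stepL s.cells B (c k) sym fresh).1 B
            (stepL s.cells B (c k) sym fresh).2 i
          = tf n' f' B ((k' : ℤ) + i) := by rw [hhd]; exact tapeOf_chain hch' B k' i
        _ = shiftTape Dir.L sym (fun i => tf n f B ((k : ℤ) + i)) i := htape i
        _ = shiftTape Dir.L sym (tapeOf s.cells B (c k)) i := by
            have : (fun i => tf n f B ((k : ℤ) + i)) = tapeOf s.cells B (c k) :=
              funext fun j => (tapeOf_chain hch B k j).symm
            rw [this]
  · -- Dir.R
    have hs'' : s' = ⟨(stepR s.cells B s.head sym fresh).1,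
        (stepR s.cells B s.head sym fresh).2, q'⟩ := hs'
    subst hs''
    rw [hk]
    obtain ⟨n', c', f', k', hch', hhd, htape⟩ := step_R hch k fresh hfresh sym B
    constructor
    · exact (WF_iff _).2 ⟨n', c', f', k', hch', hhd⟩
    · show (q', tapeOf (stepR s.cells B (c k) sym fresh).1 B
        (stepR s.cells B (c k) sym fresh).2) = _
      refine congrArg (Prod.mk q') (funext fun i => ?_)
      calc tapeOf (stepR s.cells B (c k) sym fresh).1 B
            (stepR s.cells B (c k) sym fresh).2 i
          = tf n' f' B ((k' : ℤ) + i) := by rw [hhd]; exact tapeOf_chain hch' B k' i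
        _ = shiftTape Dir.R sym (fun i => tf n f B ((k : ℤ) + i)) i := htape i
        _ = shiftTape Dir.R sym (tapeOf s.cells B (c k)) i := by
            have : (fun i => tf n f B ((k : ℤ) + i)) = tapeOf s.cells B (c k) :=
              funext fun j => (tapeOf_chain hch B k j).symm
            rw [this]

end Aux5

/-- the simulation invariant is preserved: starting from a well-formed
linked-list state whose implementation configuration equals the TM configuration,
after any number `k` of simulation steps the state is still well-formed and its
implementation configuration equals the TM configuration after `k` TM transitions. -/
theorem simulation_invariant {Q Γ L : Type*} [DecidableEq L]
    (δ : Q × Γ → Option (Q × Γ × Dir)) (B : Γ) (k : ℕ)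
    (ss : ℕ → SimState Q Γ L) (tc : ℕ → Q × (ℤ → Γ))
    (hWF : WF (ss 0)) (hconf : implConfig B (ss 0) = tc 0)
    (hsim : ∀ i < k, SimStep δ B (ss i) (ss (i + 1)))
    (htm : ∀ i < k, TMStep δ (tc i) (tc (i + 1))) :
    WF (ss k) ∧ implConfig B (ss k) = tc k := by
  induction k with
  | zero => exact ⟨hWF, hconf⟩
  | succ m ih =>
    obtain ⟨w, cfg⟩ := ih (fun i hi => hsim i (by omega)) (fun i hi => htm i (by omega))
    exact one_step w cfg (hsim m (by omega)) (htm m (by omega))
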